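/- Let H be a complex Hilbert space, let A and B be nonzero bounded linear operators on H, and let n ≥ 2 be an integer. Then ⟨Ax, x⟩ = ⟨Bx, x⟩^n holds for every unit vector x ∈ H if and only if there exists a complex number c such that A = c^n I and B = cI. -/

import Mathlib

open Polynomial Complex

lemma poly_zero_of_circle (P : Polynomial ℂ) (h : ∀ w : ℂ, ‖w‖ = 1 → P.eval w = 0) :
    P = 0 := by
  apply Polynomial.eq_zero_of_infinite_isRoot
  have hinf : Set.Infinite ((fun t : ℝ => Complex.exp (t * Complex.I)) '' (Set.Ioo 0 1)) := by
    apply Set.Infinite.image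
    · intro a ha b hb hab
      simp only at hab
      have h1 : Complex.exp ((a : ℂ) * I - (b : ℂ) * I) = 1 := by
        rw [Complex.exp_sub, hab, div_self (Complex.exp_ne_zero _)]
      rw [Complex.exp_eq_one_iff] at h1
      obtain ⟨k, hk⟩ := h1
      have : ((a - b : ℝ) : ℂ) * I = (k : ℂ) * (2 * Real.pi) * I := by
        push_cast
        linear_combination hk
      have h2 : (a - b : ℝ) = (k : ℝ) * (2 * Real.pi) := by
        have := mul_right_cancel₀ Complex.I_ne_zero this
        exact_mod_cast this
      have hπ : (2:ℝ) ≤ 2 * Real.pi := by nlinarith [Real.pi_gt_three]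
      have hab' : |a - b| < 1 := by
        rw [abs_lt]; cases ha; cases hb; constructor <;> linarith
      have hk0 : k = 0 := by
        by_contra hk0
        have : (1:ℝ) ≤ |(k:ℝ)| := by
          exact_mod_cast Int.one_le_abs (by exact_mod_cast hk0)
        have : (2:ℝ) ≤ |a - b| := by
          rw [h2, abs_mul]
          have : |(2 * Real.pi)| = 2 * Real.pi := abs_of_pos (by positivity)
          nlinarith
        linarith
      have : a - b = 0 := by rw [h2, hk0]; simp
      linarith
    · exact Set.Ioo_infinite (by norm_num : (0:ℝ) < 1)
  refine hinf.mono ?_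
  rintro w ⟨t, _, rfl⟩
  exact h _ (by simp [Complex.norm_exp])


lemma scalar_of_eigen {H : Type*} [NormedAddCommGroup H] [InnerProductSpace ℂ H]
    (B : H →L[ℂ] H) (h : ∀ x : H, ∃ c : ℂ, B x = c • x) :
    ∃ c : ℂ, B = c • (1 : H →L[ℂ] H) := by
  by_cases htriv : ∀ x : H, x = 0
  · exact ⟨0, by ext x; simp [htriv x]⟩
  push_neg at htriv
  obtain ⟨x0, hx0⟩ := htriv
  obtain ⟨c, hc⟩ := h x0
  refine ⟨c, ?_⟩
  ext x
  simp only [ContinuousLinearMap.smul_apply, ContinuousLinearMap.one_apply]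
  by_cases hdep : ∃ a : ℂ, x = a • x0
  · obtain ⟨a, rfl⟩ := hdep
    rw [map_smul, hc, smul_comm]
  · obtain ⟨d, hd⟩ := h x
    obtain ⟨e, he⟩ := h (x + x0)
    rw [map_add, hd, hc, smul_add] at he
    have key : (d - e) • x = (e - c) • x0 := by
      have := he
      rw [sub_smul, sub_smul]
      linear_combination (norm := module) he
    have hde : d = e := by
      by_contra hde
      apply hdep
      refine ⟨(d - e)⁻¹ * (e - c), ?_⟩
      rw [mul_smul, ← key, inv_smul_smul₀ (sub_ne_zero.2 hde)]
    have hec : e = c := by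
      rw [hde, sub_self, zero_smul] at key
      have h0 := (smul_eq_zero.1 key.symm).resolve_right hx0
      exact sub_eq_zero.1 h0
    rw [hd, hde, hec]


lemma key_orth {H : Type*} [NormedAddCommGroup H] [InnerProductSpace ℂ H]
    (A B : H →L[ℂ] H) (n : ℕ) (hn : 2 ≤ n)
    (h : ∀ x : H, ‖x‖ = 1 → (inner ℂ (A x) x : ℂ) = (inner ℂ (B x) x : ℂ) ^ n)
    {x y : H} (hx : ‖x‖ = 1) (hy : ‖y‖ = 1) (hxy : (inner ℂ x y : ℂ) = 0) :
    (inner ℂ (B y) x : ℂ) = 0 := by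
  obtain ⟨m, rfl⟩ : ∃ m, n = m + 2 := ⟨n - 2, by omega⟩
  set s : ℂ := inner ℂ (B x) x + inner ℂ (B y) y with hs
  set a : ℂ := inner ℂ (B x) y with ha
  set b : ℂ := inner ℂ (B y) x with hb
  set t : ℂ := inner ℂ (A x) x + inner ℂ (A y) y with ht
  set a' : ℂ := inner ℂ (A x) y with ha'
  set b' : ℂ := inner ℂ (A y) x with hb'
  have hyx : (inner ℂ y x : ℂ) = 0 := by rw [← inner_conj_symm, hxy, map_zero]
  have hxx : (inner ℂ x x : ℂ) = 1 := by rw [inner_self_eq_norm_sq_to_K, hx]; norm_num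
  have hyy : (inner ℂ y y : ℂ) = 1 := by rw [inner_self_eq_norm_sq_to_K, hy]; norm_num
  have hsq : (Real.sqrt 2 : ℂ) * (Real.sqrt 2 : ℂ) = 2 := by
    norm_cast
    exact Real.mul_self_sqrt (by norm_num)
  have hc2 : ((Real.sqrt 2 : ℂ))⁻¹ * ((Real.sqrt 2 : ℂ))⁻¹ = (2:ℂ)⁻¹ := by
    rw [← mul_inv, hsq]
  -- key pointwise identity
  have main : ∀ w : ℂ, ‖w‖ = 1 →
      2⁻¹ * (t + a' * w + b' * w⁻¹) = (2⁻¹ * (s + a * w + b * w⁻¹)) ^ (m + 2) := by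
    intro w hw
    have hw0 : w ≠ 0 := by intro h0; rw [h0] at hw; simp at hw
    have hcw : (starRingEnd ℂ) w = w⁻¹ := by
      field_simp
      rw [mul_comm, Complex.mul_conj]
      norm_cast
      rw [← Complex.sq_norm, hw]; norm_num
    set c : ℂ := ((Real.sqrt 2 : ℂ))⁻¹ with hcdef
    have hcc : (starRingEnd ℂ) c = c := by
      rw [hcdef, map_inv₀, Complex.conj_ofReal]
    set z : H := c • (x + w • y) with hz
    have expand : ∀ T : H →L[ℂ] H, (inner ℂ (T z) z : ℂ) =
        2⁻¹ * ((inner ℂ (T x) x + inner ℂ (T y) y : ℂ) + inner ℂ (T x) y * w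
          + inner ℂ (T y) x * w⁻¹) := by
      intro T
      have hwc : (starRingEnd ℂ) w * w = 1 := by
        rw [hcw, inv_mul_cancel₀ hw0]
      rw [hz]
      simp only [map_smul, inner_smul_left, inner_smul_right, map_add,
        inner_add_left, inner_add_right, hcc, hcw]
      field_simp
      linear_combination (2 * (inner ℂ (T x) x * w + inner ℂ (T y) x +
        (inner ℂ (T x) y * w + inner ℂ (T y) y) * w)) * hc2
    have hzz : (inner ℂ z z : ℂ) = 1 := by
      have := expand (1 : H →L[ℂ] H)
      simp only [ContinuousLinearMap.one_apply] at this
      rw [this, hxx, hyy, hxy, hyx]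
      ring
    have hz1 : ‖z‖ = 1 := by
      have h1 := inner_self_eq_norm_sq_to_K (𝕜 := ℂ) z
      rw [hzz] at h1
      have h2 : (‖z‖ : ℝ) ^ 2 = 1 := by
        have := h1.symm
        push_cast at this
        exact_mod_cast congrArg Complex.re this
      nlinarith [norm_nonneg z]
    have hEq := h z hz1
    rw [expand A, expand B] at hEq
    exact hEq
  -- build the polynomial vanishing on the circle
  set P : Polynomial ℂ := C ((2:ℂ)⁻¹ ^ (m+2)) * (C b + C s * X + C a * X^2)^(m+2)
      - C (2:ℂ)⁻¹ * (C b' * X^(m+1) + C t * X^(m+2) + C a' * X^(m+3)) with hPdef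
  have hP0 : P = 0 := by
    apply poly_zero_of_circle
    intro w hw
    have hw0 : w ≠ 0 := by intro h0; rw [h0] at hw; simp at hw
    have hm := main w hw
    rw [hPdef]
    simp only [eval_sub, eval_mul, eval_pow, eval_add, eval_C, eval_X]
    have key2 : b + s * w + a * w^2 = (s + a * w + b * w⁻¹) * w := by
      field_simp; ring
    rw [key2, sub_eq_zero]
    calc (2:ℂ)⁻¹ ^ (m+2) * ((s + a * w + b * w⁻¹) * w) ^ (m+2)
        = ((2:ℂ)⁻¹ * (s + a * w + b * w⁻¹)) ^ (m+2) * w ^ (m+2) := by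
          rw [mul_pow, mul_pow]; ring
      _ = (2⁻¹ * (t + a' * w + b' * w⁻¹)) * w ^ (m+2) := by rw [← hm]
      _ = 2⁻¹ * (b' * w ^ (m+1) + t * w ^ (m+2) + a' * w ^ (m+3)) := by
          field_simp; ring
  have hb0 : ((2:ℂ)⁻¹) ^ (m+2) * b ^ (m+2) = 0 := by
    have heval := congrArg (Polynomial.eval 0) hP0
    rw [hPdef] at heval
    simpa using heval
  have : b ^ (m+2) = 0 := by
    have h2 : ((2:ℂ)⁻¹) ^ (m+2) ≠ 0 := pow_ne_zero _ (by norm_num)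
    exact (mul_eq_zero.1 hb0).resolve_left h2
  exact pow_eq_zero_iff (by omega) |>.1 this



/-- Lemma 3.4: for nonzero bounded operators `A, B` on a complex Hilbert space `H` and an
integer `n ≥ 2`, one has `⟨Ax, x⟩ = ⟨Bx, x⟩^n` for every unit vector `x` if and only if
there exists `c ∈ ℂ` with `A = c^n I` and `B = c I`. -/
theorem quadraticForm_power_iff_scalar {H : Type*} [NormedAddCommGroup H]
    [InnerProductSpace ℂ H] [CompleteSpace H]
    (A B : H →L[ℂ] H) (hA : A ≠ 0) (hB : B ≠ 0) (n : ℕ) (hn : 2 ≤ n) :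
    (∀ x : H, ‖x‖ = 1 → (inner ℂ (A x) x : ℂ) = (inner ℂ (B x) x : ℂ) ^ n) ↔
      ∃ c : ℂ, A = c ^ n • (1 : H →L[ℂ] H) ∧ B = c • (1 : H →L[ℂ] H) := by
  constructor
  · intro h
    -- every vector is an eigenvector of B
    have heig : ∀ x : H, ∃ c : ℂ, B x = c • x := by
      intro x
      by_cases hx0 : x = 0
      · exact ⟨0, by simp [hx0]⟩
      have hmem : B x ∈ (ℂ ∙ x)ᗮᗮ := by
        rw [Submodule.mem_orthogonal]
        intro u hu
        by_cases hu0 : u = 0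
        · simp [hu0]
        have hux : (inner ℂ u x : ℂ) = 0 := by
          rw [← inner_conj_symm]
          rw [(Submodule.mem_orthogonal (ℂ ∙ x) u).1 hu x
            (Submodule.mem_span_singleton_self x), map_zero]
        have hnx : ‖x‖ ≠ 0 := norm_ne_zero_iff.2 hx0
        have hnu : ‖u‖ ≠ 0 := norm_ne_zero_iff.2 hu0
        set xh : H := ((‖x‖ : ℂ))⁻¹ • x with hxh
        set uh : H := ((‖u‖ : ℂ))⁻¹ • u with huh
        have hxh1 : ‖xh‖ = 1 := by
          rw [hxh, norm_smul, norm_inv, Complex.norm_real, norm_norm,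
            inv_mul_cancel₀ hnx]
        have huh1 : ‖uh‖ = 1 := by
          rw [huh, norm_smul, norm_inv, Complex.norm_real, norm_norm,
            inv_mul_cancel₀ hnu]
        have horth : (inner ℂ uh xh : ℂ) = 0 := by
          rw [huh, hxh, inner_smul_left, inner_smul_right, hux]
          ring
        have hres := key_orth A B n hn h huh1 hxh1 horth
        rw [hxh, huh, map_smul, inner_smul_left, inner_smul_right, map_inv₀,
          Complex.conj_ofReal] at hres
        have h1 : ((‖x‖ : ℂ))⁻¹ ≠ 0 := by
          simp only [ne_eq, inv_eq_zero, Complex.ofReal_eq_zero]; exact hnx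
        have h2 : ((‖u‖ : ℂ))⁻¹ ≠ 0 := by
          simp only [ne_eq, inv_eq_zero, Complex.ofReal_eq_zero]; exact hnu
        have : (inner ℂ (B x) u : ℂ) = 0 := by
          simp only [mul_eq_zero, inv_eq_zero, Complex.ofReal_eq_zero] at hres
          tauto
        rw [← inner_conj_symm, this, map_zero]
      rw [Submodule.orthogonal_orthogonal] at hmem
      obtain ⟨c, hc⟩ := Submodule.mem_span_singleton.1 hmem
      exact ⟨c, hc.symm⟩
    obtain ⟨c, hc⟩ := scalar_of_eigen B heig
    refine ⟨c, ?_, hc⟩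
    -- now show A = c^n • 1
    have hunit : ∀ x : H, ‖x‖ = 1 → (inner ℂ (A x) x : ℂ) = ((starRingEnd ℂ) c) ^ n := by
      intro x hx
      rw [h x hx, hc]
      simp only [ContinuousLinearMap.smul_apply, ContinuousLinearMap.one_apply,
        inner_smul_left]
      rw [inner_self_eq_norm_sq_to_K, hx]
      push_cast
      ring
    have hzero : ∀ x : H, (inner ℂ ((A - c ^ n • (1 : H →L[ℂ] H)) x) x : ℂ) = 0 := by
      intro x
      by_cases hx0 : x = 0
      · simp [hx0]
      have hnx : ‖x‖ ≠ 0 := norm_ne_zero_iff.2 hx0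
      set xh : H := ((‖x‖ : ℂ))⁻¹ • x with hxh
      have hxh1 : ‖xh‖ = 1 := by
        rw [hxh, norm_smul, norm_inv, Complex.norm_real, norm_norm,
          inv_mul_cancel₀ hnx]
      have hv : (inner ℂ ((A - c ^ n • (1 : H →L[ℂ] H)) xh) xh : ℂ) = 0 := by
        simp only [ContinuousLinearMap.sub_apply, ContinuousLinearMap.smul_apply,
          ContinuousLinearMap.one_apply, inner_sub_left, inner_smul_left]
        rw [hunit xh hxh1, inner_self_eq_norm_sq_to_K, hxh1, map_pow]
        push_cast
        ring
      rw [hxh, map_smul, inner_smul_left, inner_smul_right, map_inv₀,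
        Complex.conj_ofReal] at hv
      have h1 : ((‖x‖ : ℂ))⁻¹ ≠ 0 := by
        simp only [ne_eq, inv_eq_zero, Complex.ofReal_eq_zero]; exact hnx
      simp only [mul_eq_zero, inv_eq_zero, Complex.ofReal_eq_zero] at hv
      tauto
    have hT : (A - c ^ n • (1 : H →L[ℂ] H) : H →ₗ[ℂ] H) = 0 :=
      (inner_map_self_eq_zero _).1 hzero
    have : A - c ^ n • (1 : H →L[ℂ] H) = 0 := by
      ext v
      exact congrFun (congrArg DFunLike.coe hT) v
    exact sub_eq_zero.1 this
  · rintro ⟨c, rfl, rfl⟩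
    intro x hx
    simp only [ContinuousLinearMap.smul_apply, ContinuousLinearMap.one_apply,
      inner_smul_left]
    rw [inner_self_eq_norm_sq_to_K, hx, map_pow]
    push_cast
    ring
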